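/- For every real d ≥ 1, the value x_d(1) of the solution of x'(t)=1-x(t)^d, x(0)=0, at time t = 1 satisfies ((2d+1)/(4d+1))^{1/d} ≤ x_d(1) ≤ ((d+1)/(2d+1))^{1/d}. -/

import Mathlib

open Set

/-- Comparison helper: if `f` is continuous on `[0,1]`, `f 0 ≤ 0`, and at every interior
point where `f > 0` the function has a nonpositive derivative, then `f 1 ≤ 0`. -/
lemma xd_comp_aux (f : ℝ → ℝ) (hc : ContinuousOn f (Icc 0 1)) (h0 : f 0 ≤ 0)
    (hder : ∀ t ∈ Ioo (0:ℝ) 1, 0 < f t → ∃ m ≤ (0:ℝ), HasDerivAt f m t) : f 1 ≤ 0 := by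
  by_contra hcon
  push_neg at hcon
  set S : Set ℝ := Icc 0 1 ∩ f ⁻¹' (Iic 0) with hS
  have hSne : S.Nonempty := ⟨0, ⟨left_mem_Icc.2 zero_le_one, by simpa using h0⟩⟩
  have hSbdd : BddAbove S := ⟨1, fun t ht => ht.1.2⟩
  have hSclosed : IsClosed S := hc.preimage_isClosed_of_isClosed isClosed_Icc isClosed_Iic
  set a := sSup S with ha
  have haS : a ∈ S := hSclosed.csSup_mem hSne hSbdd
  have haf : f a ≤ 0 := haS.2
  have ha0 : 0 ≤ a := haS.1.1
  have ha1 : a < 1 := by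
    rcases lt_or_eq_of_le haS.1.2 with h | h
    · exact h
    · exact absurd (h ▸ haf) (not_le.2 hcon)
  have hpos : ∀ t, a < t → t ≤ 1 → 0 < f t := by
    intro t hat ht1
    by_contra hle; push_neg at hle
    have : t ∈ S := ⟨⟨le_trans ha0 hat.le, ht1⟩, hle⟩
    exact absurd (le_csSup hSbdd this) (not_le.2 hat)
  have hsub : Icc a 1 ⊆ Icc 0 1 := Icc_subset_Icc ha0 le_rfl
  have hmem : ∀ t ∈ interior (Icc a 1), t ∈ Ioo (0:ℝ) 1 ∧ 0 < f t := by
    intro t ht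
    rw [interior_Icc] at ht
    exact ⟨⟨lt_of_le_of_lt ha0 ht.1, ht.2⟩, hpos t ht.1 ht.2.le⟩
  have hanti : AntitoneOn f (Icc a 1) := by
    apply antitoneOn_of_deriv_nonpos (convex_Icc a 1) (hc.mono hsub)
    · intro t ht
      obtain ⟨t1, t2⟩ := hmem t ht
      obtain ⟨m, _, hdm⟩ := hder t t1 t2
      exact hdm.differentiableAt.differentiableWithinAt
    · intro t ht
      obtain ⟨t1, t2⟩ := hmem t ht
      obtain ⟨m, hm, hdm⟩ := hder t t1 t2
      rw [hdm.deriv]; exact hm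
  have := hanti (left_mem_Icc.2 ha1.le) (right_mem_Icc.2 ha1.le) ha1.le
  exact absurd (le_trans this haf) (not_le.2 hcon)

/-- Derivative of the barrier `s ↦ s * ((e+1)/(e+1+e*s^d))^(1/d)` at `t > 0`. -/
lemma xd_bar_deriv (d e : ℝ) (hd : 1 ≤ d) (he : 0 < e) (t : ℝ) (ht : 0 < t) :
    HasDerivAt (fun s : ℝ => s * ((e + 1) / (e + 1 + e * s ^ d)) ^ (1 / d))
      (((e + 1) / (e + 1 + e * t ^ d)) ^ (1 / d) * ((e + 1) / (e + 1 + e * t ^ d))) t := by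
  have hd0 : (0:ℝ) < d := lt_of_lt_of_le one_pos hd
  have hτ0 : 0 < t ^ d := Real.rpow_pos_of_pos ht d
  have hU : 0 < e + 1 + e * t ^ d := by nlinarith
  have hq : 0 < (e + 1) / (e + 1 + e * t ^ d) := by positivity
  have h1 : HasDerivAt (fun s : ℝ => s ^ d) (d * t ^ (d - 1)) t :=
    Real.hasDerivAt_rpow_const (Or.inl ht.ne')
  have hU' : HasDerivAt (fun s : ℝ => e + 1 + e * s ^ d) (e * (d * t ^ (d - 1))) t :=
    (h1.const_mul e).const_add (e + 1)
  have hq' : HasDerivAt (fun s : ℝ => (e + 1) / (e + 1 + e * s ^ d))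
      ((0 * (e + 1 + e * t ^ d) - (e + 1) * (e * (d * t ^ (d - 1)))) /
        (e + 1 + e * t ^ d) ^ 2) t :=
    (hasDerivAt_const t (e + 1)).div hU' hU.ne'
  have hr : HasDerivAt (fun s : ℝ => ((e + 1) / (e + 1 + e * s ^ d)) ^ (1 / d))
      ((0 * (e + 1 + e * t ^ d) - (e + 1) * (e * (d * t ^ (d - 1)))) /
          (e + 1 + e * t ^ d) ^ 2 * (1 / d) *
        ((e + 1) / (e + 1 + e * t ^ d)) ^ (1 / d - 1)) t :=
    hq'.rpow_const (Or.inl hq.ne')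
  have hz := (hasDerivAt_id' t).mul hr
  convert hz using 1
  · rfl
  · rfl
  · rfl
  have e1 : t ^ (d - 1) = t ^ d / t := by
    rw [Real.rpow_sub ht, Real.rpow_one]
  have e2 : ((e + 1) / (e + 1 + e * t ^ d)) ^ (1 / d - 1) =
      ((e + 1) / (e + 1 + e * t ^ d)) ^ (1 / d) / ((e + 1) / (e + 1 + e * t ^ d)) := by
    rw [Real.rpow_sub hq, Real.rpow_one]
  rw [e1, e2]
  have hene : (e + 1) ≠ 0 := by positivity
  field_simp
  ring

/-- The `d`-th power of the barrier. -/
lemma xd_bar_pow (d e : ℝ) (hd : 1 ≤ d) (he : 0 < e) (t : ℝ) (ht : 0 ≤ t) :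
    (t * ((e + 1) / (e + 1 + e * t ^ d)) ^ (1 / d)) ^ d
      = t ^ d * ((e + 1) / (e + 1 + e * t ^ d)) := by
  have hd0 : (0:ℝ) < d := lt_of_lt_of_le one_pos hd
  have hτ : 0 ≤ t ^ d := Real.rpow_nonneg ht d
  have hU : 0 < e + 1 + e * t ^ d := by nlinarith
  have hq : (0:ℝ) ≤ (e + 1) / (e + 1 + e * t ^ d) := by positivity
  rw [Real.mul_rpow ht (Real.rpow_nonneg hq _), ← Real.rpow_mul hq,
    one_div_mul_cancel hd0.ne', Real.rpow_one]

/-- Continuity of the barrier on `[0,1]`. -/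
lemma xd_bar_cont (d e : ℝ) (hd : 1 ≤ d) (he : 0 < e) :
    ContinuousOn (fun s : ℝ => s * ((e + 1) / (e + 1 + e * s ^ d)) ^ (1 / d)) (Icc 0 1) := by
  have hd0 : (0:ℝ) < d := lt_of_lt_of_le one_pos hd
  have hτ : Continuous (fun s : ℝ => s ^ d) := Real.continuous_rpow_const hd0.le
  have hUne : ∀ s ∈ Icc (0:ℝ) 1, e + 1 + e * s ^ d ≠ 0 := by
    intro s hs
    have : 0 ≤ s ^ d := Real.rpow_nonneg hs.1 d
    positivity
  have hq : ContinuousOn (fun s : ℝ => (e + 1) / (e + 1 + e * s ^ d)) (Icc 0 1) :=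
    continuousOn_const.div (continuousOn_const.add (continuousOn_const.mul hτ.continuousOn)) hUne
  have hr := hq.rpow_const (p := 1 / d) (fun s hs => Or.inr (by positivity))
  exact continuousOn_id.mul hr

/-- Bernoulli-based inequality for the upper barrier (supersolution direction). -/
lemma xd_upper_ineq (d : ℝ) (hd : 1 ≤ d) (τ : ℝ) (h0 : 0 ≤ τ) (h1 : τ ≤ 1) :
    1 - τ / (d + 1) ≤ ((d + 1) / (d + 1 + d * τ)) ^ (1 / d) := by
  have hd0 : (0:ℝ) < d := lt_of_lt_of_le one_pos hd
  set β := τ / (d + 1) with hβ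
  have hβ0 : 0 ≤ β := by positivity
  have hβ1 : β ≤ 1 := by
    rw [hβ, div_le_one (by linarith)]; linarith
  have hber : 1 + d * β ≤ (1 + β) ^ d := one_add_mul_self_le_rpow_one_add (by linarith) hd
  have hkey : (1 - β) ^ d * (1 + d * β) ≤ 1 := by
    calc (1 - β) ^ d * (1 + d * β) ≤ (1 - β) ^ d * (1 + β) ^ d := by
          apply mul_le_mul_of_nonneg_left hber (Real.rpow_nonneg (by linarith) d)
      _ = ((1 - β) * (1 + β)) ^ d := (Real.mul_rpow (by linarith) (by linarith)).symm
      _ ≤ 1 := Real.rpow_le_one (by nlinarith) (by nlinarith) hd0.le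
  have hq : (1 - β) ^ d ≤ (d + 1) / (d + 1 + d * τ) := by
    have h2 : 0 < 1 + d * β := by positivity
    have h3 : (1 - β) ^ d ≤ 1 / (1 + d * β) := by
      rw [le_div_iff₀ h2]; exact hkey
    have h4 : (1:ℝ) / (1 + d * β) = (d + 1) / (d + 1 + d * τ) := by
      rw [hβ]
      have : (0:ℝ) < d + 1 := by linarith
      rw [div_eq_div_iff (by positivity) (by nlinarith [mul_nonneg hd0.le h0])]
      field_simp
    rw [← h4]; exact h3
  calc 1 - τ / (d + 1) = ((1 - β) ^ d) ^ (1 / d) := by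
        rw [← Real.rpow_mul (by linarith), mul_one_div_cancel hd0.ne', Real.rpow_one, hβ]
    _ ≤ ((d + 1) / (d + 1 + d * τ)) ^ (1 / d) :=
        Real.rpow_le_rpow (Real.rpow_nonneg (by linarith) d) hq (by positivity)

/-- Bernoulli-based inequality for the lower barrier (subsolution direction). -/
lemma xd_lower_ineq (d : ℝ) (hd : 1 ≤ d) (τ : ℝ) (h0 : 0 ≤ τ) (h1 : τ ≤ 1) :
    ((2 * d + 1) / (2 * d + 1 + 2 * d * τ)) ^ (1 / d) ≤ 1 - τ / (2 * d + 1) := by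
  have hd0 : (0:ℝ) < d := lt_of_lt_of_le one_pos hd
  set γ := τ / (2 * d + 1) with hγ
  have hγ0 : 0 ≤ γ := by positivity
  have hγe : γ * (2 * d + 1) = τ := by
    rw [hγ]; field_simp
  have hγ2 : 2 * d * γ ≤ 1 := by nlinarith
  have hdγ : 0 ≤ d * γ := mul_nonneg hd0.le hγ0
  have hber : 1 - d * γ ≤ (1 - γ) ^ d := by
    have := one_add_mul_self_le_rpow_one_add (s := -γ) (by nlinarith) hd
    have h1γ : (1:ℝ) + -γ = 1 - γ := by ring
    rw [h1γ] at this
    linarith [this]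
  have hkey : 1 ≤ (1 - γ) ^ d * (1 + 2 * d * γ) := by
    have h2 : 0 < 1 + 2 * d * γ := by positivity
    calc (1:ℝ) ≤ (1 - d * γ) * (1 + 2 * d * γ) := by
          nlinarith [mul_nonneg hdγ (sub_nonneg.2 hγ2)]
      _ ≤ (1 - γ) ^ d * (1 + 2 * d * γ) := mul_le_mul_of_nonneg_right hber h2.le
  have hq : (2 * d + 1) / (2 * d + 1 + 2 * d * τ) ≤ (1 - γ) ^ d := by
    have h2 : 0 < 1 + 2 * d * γ := by positivity
    have h3 : (1:ℝ) / (1 + 2 * d * γ) ≤ (1 - γ) ^ d := by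
      rw [div_le_iff₀ h2]; exact hkey
    have h4 : (1:ℝ) / (1 + 2 * d * γ) = (2 * d + 1) / (2 * d + 1 + 2 * d * τ) := by
      rw [hγ]
      have h2d : (0:ℝ) < 2 * d + 1 := by linarith
      rw [div_eq_div_iff (by positivity) (by nlinarith [mul_nonneg hd0.le h0])]
      field_simp
    rw [← h4]; exact h3
  calc ((2 * d + 1) / (2 * d + 1 + 2 * d * τ)) ^ (1 / d)
      ≤ ((1 - γ) ^ d) ^ (1 / d) := by
        apply Real.rpow_le_rpow (by positivity) hq (by positivity)
    _ = 1 - τ / (2 * d + 1) := by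
        rw [← Real.rpow_mul (by nlinarith), mul_one_div_cancel hd0.ne', Real.rpow_one, hγ]

theorem xd_one_bounds (d : ℝ) (hd : 1 ≤ d) (x : ℝ → ℝ)
    (h0 : x 0 = 0)
    (hx : ∀ t : ℝ, 0 ≤ t → x t ∈ Set.Ico (0:ℝ) 1 ∧ HasDerivAt x (1 - x t ^ d) t) :
    ((2 * d + 1) / (4 * d + 1)) ^ (1 / d) ≤ x 1 ∧
      x 1 ≤ ((d + 1) / (2 * d + 1)) ^ (1 / d) := by
  have hd0 : (0:ℝ) < d := lt_of_lt_of_le one_pos hd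
  have hxc : ContinuousOn x (Icc 0 1) :=
    fun t ht => ((hx t ht.1).2).continuousAt.continuousWithinAt
  constructor
  · -- lower bound, barrier with e = 2d
    have he : (0:ℝ) < 2 * d := by linarith
    have hgx : (fun s : ℝ => s * ((2 * d + 1) / (2 * d + 1 + 2 * d * s ^ d)) ^ (1 / d)) 1
        - x 1 ≤ 0 := by
      apply xd_comp_aux
        (fun s : ℝ => s * ((2 * d + 1) / (2 * d + 1 + 2 * d * s ^ d)) ^ (1 / d) - x s)
      · exact (xd_bar_cont d (2 * d) hd he).sub hxc
      · simp [h0, Real.zero_rpow hd0.ne']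
      · intro t ht hpos
        have ht0 : 0 < t := ht.1
        have hτ0 : 0 < t ^ d := Real.rpow_pos_of_pos ht0 d
        have hτ1 : t ^ d ≤ 1 := Real.rpow_le_one ht0.le ht.2.le hd0.le
        have hU : 0 < 2 * d + 1 + 2 * d * t ^ d := by nlinarith
        have hq0 : 0 < (2 * d + 1) / (2 * d + 1 + 2 * d * t ^ d) := by positivity
        have hgd := xd_bar_deriv d (2 * d) hd he t ht0
        have hxd := (hx t ht0.le).2
        refine ⟨_, ?_, hgd.sub hxd⟩
        set g : ℝ := t * ((2 * d + 1) / (2 * d + 1 + 2 * d * t ^ d)) ^ (1 / d) with hgdef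
        have hpos' : 0 < g - x t := hpos
        have hxt0 : 0 ≤ x t := (hx t ht0.le).1.1
        have hxg : x t ≤ g := by linarith
        have hgt0 : 0 ≤ g := le_trans hxt0 hxg
        have hpow : x t ^ d ≤ g ^ d := Real.rpow_le_rpow hxt0 hxg hd0.le
        have hbp : g ^ d = t ^ d * ((2 * d + 1) / (2 * d + 1 + 2 * d * t ^ d)) :=
          xd_bar_pow d (2 * d) hd he t ht0.le
        have hineq := xd_lower_ineq d hd (t ^ d) hτ0.le hτ1
        have h5 : (1 - t ^ d / (2 * d + 1)) *
            ((2 * d + 1) / (2 * d + 1 + 2 * d * t ^ d)) = 1 - g ^ d := by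
          rw [hbp]
          field_simp
          ring
        have hstep : ((2 * d + 1) / (2 * d + 1 + 2 * d * t ^ d)) ^ (1 / d) *
            ((2 * d + 1) / (2 * d + 1 + 2 * d * t ^ d)) ≤ 1 - g ^ d := by
          rw [← h5]
          exact mul_le_mul_of_nonneg_right hineq hq0.le
        linarith
    have hone : ((2:ℝ) * d + 1) / (2 * d + 1 + 2 * d * (1:ℝ) ^ d)
        = (2 * d + 1) / (4 * d + 1) := by
      rw [Real.one_rpow]
      norm_num
      ring
    simp only [hone, one_mul] at hgx
    linarith
  · -- upper bound, barrier with e = d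
    have hgx : x 1
        - (fun s : ℝ => s * ((d + 1) / (d + 1 + d * s ^ d)) ^ (1 / d)) 1 ≤ 0 := by
      apply xd_comp_aux
        (fun s : ℝ => x s - s * ((d + 1) / (d + 1 + d * s ^ d)) ^ (1 / d))
      · exact hxc.sub (xd_bar_cont d d hd hd0)
      · simp [h0, Real.zero_rpow hd0.ne']
      · intro t ht hpos
        have ht0 : 0 < t := ht.1
        have hτ0 : 0 < t ^ d := Real.rpow_pos_of_pos ht0 d
        have hτ1 : t ^ d ≤ 1 := Real.rpow_le_one ht0.le ht.2.le hd0.le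
        have hU : 0 < d + 1 + d * t ^ d := by nlinarith
        have hq0 : 0 < (d + 1) / (d + 1 + d * t ^ d) := by positivity
        have hgd := xd_bar_deriv d d hd hd0 t ht0
        have hxd := (hx t ht0.le).2
        refine ⟨_, ?_, hxd.sub hgd⟩
        set g : ℝ := t * ((d + 1) / (d + 1 + d * t ^ d)) ^ (1 / d) with hgdef
        have hpos' : 0 < x t - g := hpos
        have hxt0 : 0 ≤ x t := (hx t ht0.le).1.1
        have hgx' : g ≤ x t := by linarith
        have hgt0 : 0 ≤ g := by
          rw [hgdef]; positivity
        have hpow : g ^ d ≤ x t ^ d := Real.rpow_le_rpow hgt0 hgx' hd0.le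
        have hbp : g ^ d = t ^ d * ((d + 1) / (d + 1 + d * t ^ d)) :=
          xd_bar_pow d d hd hd0 t ht0.le
        have hineq := xd_upper_ineq d hd (t ^ d) hτ0.le hτ1
        have h5 : (1 - t ^ d / (d + 1)) * ((d + 1) / (d + 1 + d * t ^ d))
            = 1 - g ^ d := by
          rw [hbp]
          field_simp
          ring
        have hstep : 1 - g ^ d ≤ ((d + 1) / (d + 1 + d * t ^ d)) ^ (1 / d) *
            ((d + 1) / (d + 1 + d * t ^ d)) := by
          rw [← h5]
          exact mul_le_mul_of_nonneg_right hineq hq0.le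
        linarith
    have hone : (d + 1) / (d + 1 + d * (1:ℝ) ^ d) = (d + 1) / (2 * d + 1) := by
      rw [Real.one_rpow]
      norm_num
      ring
    simp only [hone, one_mul] at hgx
    linarith
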